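/- Let $\mathrm{K}(x)$ and $\mathrm{E}(x)$ denote the complete elliptic integrals of the first and second kind with parameter $x$. Then for all $x \in (0,1)$, $\frac{16\sqrt{1-x}\,\mathrm{K}^3(x)\mathrm{E}(x)}{\pi^4} \le 1$. -/

import Mathlib

open Real MeasureTheory intervalIntegral

/-- The complete elliptic integral of the first kind with parameter `x`. -/
noncomputable def ellipticK (x : ℝ) : ℝ :=
  ∫ φ in (0:ℝ)..(π/2), 1 / Real.sqrt (1 - x * Real.sin φ ^ 2)

/-- The complete elliptic integral of the second kind with parameter `x`. -/
noncomputable def ellipticE (x : ℝ) : ℝ :=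
  ∫ φ in (0:ℝ)..(π/2), Real.sqrt (1 - x * Real.sin φ ^ 2)

namespace EllAux


lemma aux_pos {m : ℝ} (hm0 : 0 ≤ m) (hm1 : m < 1) (θ : ℝ) :
    0 < 1 - m * Real.sin θ ^ 2 := by
  nlinarith [Real.sin_sq_le_one θ, sq_nonneg (Real.sin θ)]

lemma contE (m : ℝ) : Continuous fun θ : ℝ => Real.sqrt (1 - m * Real.sin θ ^ 2) :=
  (continuous_const.sub (continuous_const.mul (Real.continuous_sin.pow 2))).sqrt

lemma contK {m : ℝ} (hm0 : 0 ≤ m) (hm1 : m < 1) :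
    Continuous fun θ : ℝ => 1 / Real.sqrt (1 - m * Real.sin θ ^ 2) :=
  continuous_const.div (contE m) fun θ => (Real.sqrt_pos.2 (aux_pos hm0 hm1 θ)).ne'

lemma K_ge {m : ℝ} (hm0 : 0 ≤ m) (hm1 : m < 1) : π/2 ≤ ellipticK m := by
  have h : ∀ θ ∈ Set.Icc (0:ℝ) (π/2), (1:ℝ) ≤ 1 / Real.sqrt (1 - m * Real.sin θ ^ 2) := by
    intro θ _
    rw [le_div_iff₀ (Real.sqrt_pos.2 (aux_pos hm0 hm1 θ)), one_mul]
    calc Real.sqrt (1 - m * Real.sin θ ^ 2) ≤ Real.sqrt 1 := by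
          apply Real.sqrt_le_sqrt; nlinarith [sq_nonneg (Real.sin θ)]
      _ = 1 := Real.sqrt_one
  have := intervalIntegral.integral_mono_on (μ := volume) (by positivity : (0:ℝ) ≤ π/2)
    (continuous_const.intervalIntegrable _ _) ((contK hm0 hm1).intervalIntegrable _ _) h
  rw [ellipticK]
  calc π/2 = ∫ _ in (0:ℝ)..(π/2), (1:ℝ) := by simp
    _ ≤ _ := this

lemma K_pos {m : ℝ} (hm0 : 0 ≤ m) (hm1 : m < 1) : 0 < ellipticK m :=
  lt_of_lt_of_le (by positivity) (K_ge hm0 hm1)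

lemma K_le {m : ℝ} (hm0 : 0 ≤ m) (hm1 : m < 1) :
    ellipticK m ≤ (π/2) / Real.sqrt (1 - m) := by
  have h : ∀ θ ∈ Set.Icc (0:ℝ) (π/2),
      1 / Real.sqrt (1 - m * Real.sin θ ^ 2) ≤ 1 / Real.sqrt (1 - m) := by
    intro θ _
    apply one_div_le_one_div_of_le (Real.sqrt_pos.2 (by linarith))
    apply Real.sqrt_le_sqrt; nlinarith [Real.sin_sq_le_one θ]
  have := intervalIntegral.integral_mono_on (μ := volume) (by positivity : (0:ℝ) ≤ π/2)
    ((contK hm0 hm1).intervalIntegrable _ _) (continuous_const.intervalIntegrable _ _) h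
  calc ellipticK m ≤ ∫ _ in (0:ℝ)..(π/2), 1 / Real.sqrt (1-m) := this
    _ = (π/2) / Real.sqrt (1-m) := by simp [div_eq_mul_inv]

lemma E_pos {m : ℝ} (hm0 : 0 ≤ m) (hm1 : m < 1) : 0 < ellipticE m := by
  have h : ∀ θ ∈ Set.Icc (0:ℝ) (π/2),
      Real.sqrt (1 - m) ≤ Real.sqrt (1 - m * Real.sin θ ^ 2) := by
    intro θ _; apply Real.sqrt_le_sqrt; nlinarith [Real.sin_sq_le_one θ]
  have h2 := intervalIntegral.integral_mono_on (μ := volume) (by positivity : (0:ℝ) ≤ π/2)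
    (continuous_const.intervalIntegrable _ _) ((contE m).intervalIntegrable _ _) h
  have h3 : (0:ℝ) < (π/2) * Real.sqrt (1-m) := by
    have : 0 < Real.sqrt (1-m) := Real.sqrt_pos.2 (by linarith)
    positivity
  calc (0:ℝ) < (π/2) * Real.sqrt (1-m) := h3
    _ = ∫ _ in (0:ℝ)..(π/2), Real.sqrt (1-m) := by simp
    _ ≤ ellipticE m := h2

lemma E_le (m : ℝ) (hm0 : 0 ≤ m) : ellipticE m ≤ π/2 := by
  have h : ∀ θ ∈ Set.Icc (0:ℝ) (π/2),
      Real.sqrt (1 - m * Real.sin θ ^ 2) ≤ 1 := by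
    intro θ _
    have h1 : Real.sqrt (1 - m * Real.sin θ ^ 2) ≤ Real.sqrt 1 :=
      Real.sqrt_le_sqrt (by nlinarith [sq_nonneg (Real.sin θ)])
    simpa using h1
  have := intervalIntegral.integral_mono_on (μ := volume) (by positivity : (0:ℝ) ≤ π/2)
    ((contE m).intervalIntegrable _ _) (continuous_const.intervalIntegrable _ _) h
  calc ellipticE m ≤ ∫ _ in (0:ℝ)..(π/2), (1:ℝ) := this
    _ = π/2 := by simp

-- key comparison: E ≤ (1 - m/2) K
lemma E_le_K {m : ℝ} (hm0 : 0 ≤ m) (hm1 : m < 1) :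
    ellipticE m ≤ (1 - m/2) * ellipticK m := by
  have hc : (0:ℝ) < 1 - m/2 := by linarith
  set c : ℝ := 1 / Real.sqrt (1 - m/2) with hcdef
  have hcpos : 0 < c := by positivity
  -- pointwise: m*(sin θ^2 - 1/2) * (1/√f - c) ≥ 0
  have key : ∀ θ ∈ Set.Icc (0:ℝ) (π/2),
      (0:ℝ) ≤ m * (Real.sin θ ^ 2 - 1/2) * (1 / Real.sqrt (1 - m * Real.sin θ ^ 2) - c) := by
    intro θ _
    have hf := aux_pos hm0 hm1 θ
    have hsf : 0 < Real.sqrt (1 - m * Real.sin θ ^ 2) := Real.sqrt_pos.2 hf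
    rcases le_total ((1:ℝ)/2) (Real.sin θ ^ 2) with h | h
    · apply mul_nonneg (by nlinarith)
      have : Real.sqrt (1 - m * Real.sin θ ^ 2) ≤ Real.sqrt (1 - m/2) := by
        apply Real.sqrt_le_sqrt; nlinarith
      rw [sub_nonneg, hcdef]
      apply one_div_le_one_div_of_le hsf this
    · have h1 : m * (Real.sin θ ^ 2 - 1/2) ≤ 0 := by nlinarith
      have h2 : 1 / Real.sqrt (1 - m * Real.sin θ ^ 2) - c ≤ 0 := by
        rw [sub_nonpos, hcdef]
        apply one_div_le_one_div_of_le (Real.sqrt_pos.2 (by linarith))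
        apply Real.sqrt_le_sqrt; nlinarith
      nlinarith [mul_nonneg (neg_nonneg.2 h1) (neg_nonneg.2 h2)]
  -- integral of pointwise-nonneg is nonneg
  have hint1 : IntervalIntegrable
      (fun θ => m * (Real.sin θ ^ 2 - 1/2) * (1 / Real.sqrt (1 - m * Real.sin θ ^ 2) - c))
      volume 0 (π/2) := by
    apply Continuous.intervalIntegrable
    exact (continuous_const.mul ((Real.continuous_sin.pow 2).sub continuous_const)).mul
      ((contK hm0 hm1).sub continuous_const)
  have hnn : 0 ≤ ∫ θ in (0:ℝ)..(π/2),
      m * (Real.sin θ ^ 2 - 1/2) * (1 / Real.sqrt (1 - m * Real.sin θ ^ 2) - c) :=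
    intervalIntegral.integral_nonneg (by positivity) (fun u hu => key u hu)
  -- compute: the integral equals (1-m/2)*K - E  (the c-part integrates to zero)
  have hsin2 : (∫ θ in (0:ℝ)..(π/2), (Real.sin θ ^ 2 - 1/2)) = 0 := by
    rw [intervalIntegral.integral_sub (f := fun θ : ℝ => Real.sin θ ^ 2) ((Real.continuous_sin.pow 2).intervalIntegrable _ _)
      (continuous_const.intervalIntegrable _ _)]
    rw [integral_sin_sq]
    simp
    ring
  have int1 : IntervalIntegrable
      (fun θ => m * (Real.sin θ ^ 2 - 1/2) * (1 / Real.sqrt (1 - m * Real.sin θ ^ 2)))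
      volume 0 (π/2) := by
    apply Continuous.intervalIntegrable
    exact (continuous_const.mul ((Real.continuous_sin.pow 2).sub continuous_const)).mul
      (contK hm0 hm1)
  have int2 : IntervalIntegrable (fun θ => m * c * (Real.sin θ ^ 2 - 1/2)) volume 0 (π/2) := by
    apply Continuous.intervalIntegrable
    exact continuous_const.mul ((Real.continuous_sin.pow 2).sub continuous_const)
  have e1 : (∫ θ in (0:ℝ)..(π/2),
        m * (Real.sin θ ^ 2 - 1/2) * (1 / Real.sqrt (1 - m * Real.sin θ ^ 2) - c))
      = (∫ θ in (0:ℝ)..(π/2),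
          m * (Real.sin θ ^ 2 - 1/2) * (1 / Real.sqrt (1 - m * Real.sin θ ^ 2)))
        - ∫ θ in (0:ℝ)..(π/2), m * c * (Real.sin θ ^ 2 - 1/2) := by
    rw [← intervalIntegral.integral_sub int1 int2]
    apply intervalIntegral.integral_congr
    intro θ _
    ring
  have e2 : (∫ θ in (0:ℝ)..(π/2), m * c * (Real.sin θ ^ 2 - 1/2)) = 0 := by
    rw [intervalIntegral.integral_const_mul, hsin2, mul_zero]
  have e3 : (∫ θ in (0:ℝ)..(π/2),
        m * (Real.sin θ ^ 2 - 1/2) * (1 / Real.sqrt (1 - m * Real.sin θ ^ 2)))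
      = (1 - m/2) * ellipticK m - ellipticE m := by
    rw [ellipticK, ellipticE, ← intervalIntegral.integral_const_mul,
      ← intervalIntegral.integral_sub]
    · apply intervalIntegral.integral_congr
      intro θ _
      have hf := aux_pos hm0 hm1 θ
      have hsf : 0 < Real.sqrt (1 - m * Real.sin θ ^ 2) := Real.sqrt_pos.2 hf
      have hsq : Real.sqrt (1 - m * Real.sin θ ^ 2) * Real.sqrt (1 - m * Real.sin θ ^ 2)
          = 1 - m * Real.sin θ ^ 2 := Real.mul_self_sqrt hf.le
      field_simp
      nlinarith [hsq]
    · exact (continuous_const.mul (contK hm0 hm1)).intervalIntegrable _ _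
    · exact (contE m).intervalIntegrable _ _
  rw [e1, e2, e3, sub_zero] at hnn
  linarith


lemma primitive_hasDerivAt {F : ℝ → ℝ} (hF : Continuous F) (v : ℝ) :
    HasDerivAt (fun u => ∫ θ in (0:ℝ)..u, F θ) (F v) v :=
  intervalIntegral.integral_hasDerivAt_right (hF.intervalIntegrable _ _)
    (hF.stronglyMeasurable.stronglyMeasurableAtFilter) hF.continuousAt

lemma eq_endpoints_of_deriv_zero {F : ℝ → ℝ} (hc : Continuous F)
    (hd : ∀ ψ ∈ Set.Ioo (0:ℝ) (π/2), HasDerivAt F 0 ψ) : F (π/2) = F 0 := by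
  obtain ⟨c, -, hc0⟩ := exists_hasDerivAt_eq_slope F (fun _ => 0) (by positivity)
    hc.continuousOn hd
  have := hc0.symm
  rw [div_eq_iff (by rw [sub_zero]; positivity : π/2 - 0 ≠ 0)] at this
  linarith

section Landen


variable {t : ℝ}

lemma den_pos (ht0 : 0 < t) (ψ : ℝ) : 0 < 1 + t * Real.sin ψ ^ 2 := by
  nlinarith [sq_nonneg (Real.sin ψ)]

noncomputable def sig (t ψ : ℝ) : ℝ := (1 + t) * Real.sin ψ / (1 + t * Real.sin ψ ^ 2)

noncomputable def lphi (t ψ : ℝ) : ℝ := Real.arcsin (sig t ψ)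

lemma sig_cont (ht0 : 0 < t) : Continuous (sig t) :=
  (continuous_const.mul Real.continuous_sin).div
    (continuous_const.add (continuous_const.mul (Real.continuous_sin.pow 2)))
    fun ψ => (den_pos ht0 ψ).ne'

lemma lphi_cont (ht0 : 0 < t) : Continuous (lphi t) :=
  Real.continuous_arcsin.comp (sig_cont ht0)

lemma sig_zero : sig t 0 = 0 := by simp [sig]

lemma sig_pi2 (ht0 : 0 < t) : sig t (π/2) = 1 := by
  rw [sig]; rw [Real.sin_pi_div_two]; field_simp

lemma lphi_zero : lphi t 0 = 0 := by rw [lphi, sig_zero, Real.arcsin_zero]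

lemma lphi_pi2 (ht0 : 0 < t) : lphi t (π/2) = π/2 := by
  rw [lphi, sig_pi2 ht0, Real.arcsin_one]

lemma sig_nonneg (ht0 : 0 < t) {ψ : ℝ} (hs0 : 0 ≤ Real.sin ψ) : 0 ≤ sig t ψ := by
  apply div_nonneg (by nlinarith) (den_pos ht0 ψ).le

lemma sig_le_one (ht0 : 0 < t) (ht1 : t < 1) {ψ : ℝ} (hs1 : Real.sin ψ ≤ 1)
    (hs0 : 0 ≤ Real.sin ψ) : sig t ψ ≤ 1 := by
  rw [sig, div_le_one (den_pos ht0 ψ)]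
  nlinarith [mul_nonneg (sub_nonneg.2 hs1) (by nlinarith : (0:ℝ) ≤ 1 - t * Real.sin ψ)]

lemma sig_lt_one (ht0 : 0 < t) (ht1 : t < 1) {ψ : ℝ} (hs1 : Real.sin ψ < 1)
    (hs0 : 0 ≤ Real.sin ψ) : sig t ψ < 1 := by
  rw [sig, div_lt_one (den_pos ht0 ψ)]
  nlinarith [mul_pos (sub_pos.2 hs1) (by nlinarith : (0:ℝ) < 1 - t * Real.sin ψ)]

lemma hasDerivAt_sig (ht0 : 0 < t) (ψ : ℝ) :
    HasDerivAt (sig t)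
      ((1 + t) * Real.cos ψ * (1 - t * Real.sin ψ ^ 2) / (1 + t * Real.sin ψ ^ 2) ^ 2) ψ := by
  have h1 : HasDerivAt (fun ψ : ℝ => (1 + t) * Real.sin ψ) ((1 + t) * Real.cos ψ) ψ :=
    (Real.hasDerivAt_sin ψ).const_mul _
  have h2 : HasDerivAt (fun ψ : ℝ => 1 + t * Real.sin ψ ^ 2)
      (t * (2 * Real.sin ψ * Real.cos ψ)) ψ := by
    have h3 := ((Real.hasDerivAt_sin ψ).pow 2).const_mul t
    have h4 := h3.const_add (1:ℝ)
    refine h4.congr_deriv ?_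
    ring
  have h5 := h1.div h2 (den_pos ht0 ψ).ne'
  refine h5.congr_deriv ?_
  symm
  have hd := (den_pos ht0 ψ).ne'
  field_simp
  ring

lemma sqrt_one_sub_sig_sq (ht0 : 0 < t) (ht1 : t < 1) {ψ : ℝ} (hs0 : 0 ≤ Real.sin ψ)
    (hc0 : 0 ≤ Real.cos ψ) :
    Real.sqrt (1 - sig t ψ ^ 2)
      = Real.cos ψ * Real.sqrt (1 - t ^ 2 * Real.sin ψ ^ 2) / (1 + t * Real.sin ψ ^ 2) := by
  have hden := den_pos ht0 ψ
  have hg0 : (0:ℝ) ≤ 1 - t ^ 2 * Real.sin ψ ^ 2 := by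
    nlinarith [Real.sin_sq_le_one ψ, sq_nonneg (Real.sin ψ)]
  have key : 1 - sig t ψ ^ 2
      = (Real.cos ψ * Real.sqrt (1 - t ^ 2 * Real.sin ψ ^ 2) / (1 + t * Real.sin ψ ^ 2)) ^ 2 := by
    have hsq : Real.sqrt (1 - t ^ 2 * Real.sin ψ ^ 2) ^ 2 = 1 - t ^ 2 * Real.sin ψ ^ 2 :=
      Real.sq_sqrt hg0
    have hc2 : Real.cos ψ ^ 2 = 1 - Real.sin ψ ^ 2 := Real.cos_sq' ψ
    rw [sig]
    field_simp
    linear_combination (-(Real.cos ψ ^ 2)) * hsq + (-(1 - t ^ 2 * Real.sin ψ ^ 2)) * hc2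
  rw [key, Real.sqrt_sq (by positivity)]

lemma one_sub_X_sig_sq (ht0 : 0 < t) (ht1 : t < 1) (ψ : ℝ) :
    1 - (4 * t / (1 + t) ^ 2) * sig t ψ ^ 2
      = ((1 - t * Real.sin ψ ^ 2) / (1 + t * Real.sin ψ ^ 2)) ^ 2 := by
  have hden := (den_pos ht0 ψ).ne'
  have h1t : (1 + t) ≠ 0 := by positivity
  rw [sig]
  field_simp
  ring

lemma sqrt_one_sub_X_sig_sq (ht0 : 0 < t) (ht1 : t < 1) {ψ : ℝ} (hs1 : Real.sin ψ ^ 2 ≤ 1) :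
    Real.sqrt (1 - (4 * t / (1 + t) ^ 2) * sig t ψ ^ 2)
      = (1 - t * Real.sin ψ ^ 2) / (1 + t * Real.sin ψ ^ 2) := by
  rw [one_sub_X_sig_sq ht0 ht1, Real.sqrt_sq]
  apply div_nonneg (by nlinarith) (den_pos ht0 ψ).le

lemma hasDerivAt_lphi (ht0 : 0 < t) (ht1 : t < 1) {ψ : ℝ} (hψ : ψ ∈ Set.Ioo 0 (π/2)) :
    HasDerivAt (lphi t)
      ((1 + t) * (1 - t * Real.sin ψ ^ 2) /
        ((1 + t * Real.sin ψ ^ 2) * Real.sqrt (1 - t ^ 2 * Real.sin ψ ^ 2))) ψ := by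
  obtain ⟨hψ0, hψ1⟩ := hψ
  have hs0 : 0 < Real.sin ψ := Real.sin_pos_of_pos_of_lt_pi hψ0 (by linarith [Real.pi_pos])
  have hs1 : Real.sin ψ < 1 := by
    have h := Real.strictMonoOn_sin (a := ψ) (b := π/2)
      ⟨by linarith [Real.pi_pos], by linarith⟩ ⟨by linarith [Real.pi_pos], le_refl _⟩ hψ1
    simpa using h
  have hc0 : 0 < Real.cos ψ := Real.cos_pos_of_mem_Ioo ⟨by linarith [Real.pi_pos], hψ1⟩
  have hσ0 : 0 ≤ sig t ψ := sig_nonneg ht0 hs0.le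
  have hσ1 : sig t ψ < 1 := sig_lt_one ht0 ht1 hs1 hs0.le
  have harcsin := Real.hasDerivAt_arcsin (by linarith : sig t ψ ≠ -1) (by linarith : sig t ψ ≠ 1)
  have hcomp := harcsin.comp ψ (hasDerivAt_sig ht0 ψ)
  have heq : lphi t = Real.arcsin ∘ sig t := rfl
  rw [heq]
  refine hcomp.congr_deriv ?_
  symm
  rw [sqrt_one_sub_sig_sq ht0 ht1 hs0.le hc0.le]
  have hden := den_pos ht0 ψ
  have hss : Real.sin ψ ^ 2 < 1 := by nlinarith
  have hg2 : (0:ℝ) < 1 - t ^ 2 * Real.sin ψ ^ 2 := by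
    nlinarith [mul_nonneg (sq_nonneg t) (sub_nonneg.2 hss.le)]
  have hg : 0 < Real.sqrt (1 - t ^ 2 * Real.sin ψ ^ 2) := Real.sqrt_pos.2 hg2
  field_simp

lemma landenK (ht0 : 0 < t) (ht1 : t < 1) :
    ellipticK (4 * t / (1 + t) ^ 2) = (1 + t) * ellipticK (t ^ 2) := by
  have hX0 : (0:ℝ) ≤ 4 * t / (1 + t) ^ 2 := by positivity
  have hX1 : 4 * t / (1 + t) ^ 2 < 1 := by
    rw [div_lt_one (by positivity)]; nlinarith
  have ht2_0 : (0:ℝ) ≤ t ^ 2 := sq_nonneg t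
  have ht2_1 : t ^ 2 < 1 := by nlinarith
  set X := 4 * t / (1 + t) ^ 2 with hXdef
  have hcX : Continuous fun θ : ℝ => 1 / Real.sqrt (1 - X * Real.sin θ ^ 2) := contK hX0 hX1
  have hc1 : Continuous fun θ : ℝ => 1 / Real.sqrt (1 - t ^ 2 * Real.sin θ ^ 2) :=
    contK ht2_0 ht2_1
  set P : ℝ → ℝ := fun u => ∫ θ in (0:ℝ)..u, 1 / Real.sqrt (1 - X * Real.sin θ ^ 2) with hP
  set Q : ℝ → ℝ := fun u => ∫ θ in (0:ℝ)..u, 1 / Real.sqrt (1 - t ^ 2 * Real.sin θ ^ 2) with hQ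
  set F : ℝ → ℝ := fun ψ => P (lphi t ψ) - (1 + t) * Q ψ with hF
  have hFc : Continuous F := by
    apply Continuous.sub
    · exact (intervalIntegral.continuous_primitive
        (fun a b => hcX.intervalIntegrable a b) 0).comp (lphi_cont ht0)
    · exact continuous_const.mul (intervalIntegral.continuous_primitive
        (fun a b => hc1.intervalIntegrable a b) 0)
  have hzero : ∀ ψ ∈ Set.Ioo (0:ℝ) (π/2), HasDerivAt F 0 ψ := by
    intro ψ hψ
    obtain ⟨hψ0, hψ1⟩ := hψ
    have hs0 : 0 < Real.sin ψ := Real.sin_pos_of_pos_of_lt_pi hψ0 (by linarith [Real.pi_pos])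
    have hs1 : Real.sin ψ < 1 := by
      have h := Real.strictMonoOn_sin (a := ψ) (b := π/2)
        ⟨by linarith [Real.pi_pos], by linarith⟩ ⟨by linarith [Real.pi_pos], le_refl _⟩ hψ1
      simpa using h
    have hss : Real.sin ψ ^ 2 < 1 := by nlinarith
    have hden := den_pos ht0 ψ
    have hg2 : (0:ℝ) < 1 - t ^ 2 * Real.sin ψ ^ 2 := by
      nlinarith [mul_nonneg (sq_nonneg t) (sub_nonneg.2 hss.le)]
    have hg : 0 < Real.sqrt (1 - t ^ 2 * Real.sin ψ ^ 2) := Real.sqrt_pos.2 hg2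
    have h1ts : (0:ℝ) < 1 - t * Real.sin ψ ^ 2 := by nlinarith
    have hPd : HasDerivAt P (1 / Real.sqrt (1 - X * Real.sin (lphi t ψ) ^ 2)) (lphi t ψ) :=
      primitive_hasDerivAt hcX _
    have hQd : HasDerivAt Q (1 / Real.sqrt (1 - t ^ 2 * Real.sin ψ ^ 2)) ψ :=
      primitive_hasDerivAt hc1 ψ
    have hlphi := hasDerivAt_lphi ht0 ht1 ⟨hψ0, hψ1⟩
    have hcomp := hPd.comp ψ hlphi
    have hsub := hcomp.sub ((hQd.const_mul (1 + t)))
    have hsinl : Real.sin (lphi t ψ) = sig t ψ :=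
      Real.sin_arcsin (by linarith [sig_nonneg ht0 hs0.le]) (sig_le_one ht0 ht1 hs1.le hs0.le)
    have hXv : Real.sqrt (1 - X * Real.sin (lphi t ψ) ^ 2)
        = (1 - t * Real.sin ψ ^ 2) / (1 + t * Real.sin ψ ^ 2) := by
      rw [hsinl, hXdef]
      exact sqrt_one_sub_X_sig_sq ht0 ht1 hss.le
    have : HasDerivAt F
        (1 / Real.sqrt (1 - X * Real.sin (lphi t ψ) ^ 2) *
            ((1 + t) * (1 - t * Real.sin ψ ^ 2) /
              ((1 + t * Real.sin ψ ^ 2) * Real.sqrt (1 - t ^ 2 * Real.sin ψ ^ 2)))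
          - (1 + t) * (1 / Real.sqrt (1 - t ^ 2 * Real.sin ψ ^ 2))) ψ := hsub
    refine this.congr_deriv ?_
    symm
    rw [hXv]
    field_simp
    ring
  have hend := eq_endpoints_of_deriv_zero hFc hzero
  have hF0 : F 0 = 0 := by
    rw [hF]
    simp only [lphi_zero]
    simp [hP, hQ]
  have hFpi : F (π/2) = ellipticK X - (1 + t) * ellipticK (t ^ 2) := by
    rw [hF]
    simp only [lphi_pi2 ht0]
    rfl
  rw [hFpi, hF0] at hend
  linarith

lemma landenE (ht0 : 0 < t) (ht1 : t < 1) :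
    ellipticE (4 * t / (1 + t) ^ 2)
      = (2 / (1 + t)) * ellipticE (t ^ 2) - (1 - t) * ellipticK (t ^ 2) := by
  have hX0 : (0:ℝ) ≤ 4 * t / (1 + t) ^ 2 := by positivity
  have hX1 : 4 * t / (1 + t) ^ 2 < 1 := by
    rw [div_lt_one (by positivity)]; nlinarith
  have ht2_0 : (0:ℝ) ≤ t ^ 2 := sq_nonneg t
  have ht2_1 : t ^ 2 < 1 := by nlinarith
  set X := 4 * t / (1 + t) ^ 2 with hXdef
  have hcX : Continuous fun θ : ℝ => Real.sqrt (1 - X * Real.sin θ ^ 2) := contE X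
  have hcR : Continuous fun θ : ℝ =>
      2 / (1 + t) * Real.sqrt (1 - t ^ 2 * Real.sin θ ^ 2)
        - (1 - t) * (1 / Real.sqrt (1 - t ^ 2 * Real.sin θ ^ 2)) :=
    (continuous_const.mul (contE (t ^ 2))).sub (continuous_const.mul (contK ht2_0 ht2_1))
  set P : ℝ → ℝ := fun u => ∫ θ in (0:ℝ)..u, Real.sqrt (1 - X * Real.sin θ ^ 2) with hP
  set R : ℝ → ℝ := fun u => ∫ θ in (0:ℝ)..u,
      (2 / (1 + t) * Real.sqrt (1 - t ^ 2 * Real.sin θ ^ 2)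
        - (1 - t) * (1 / Real.sqrt (1 - t ^ 2 * Real.sin θ ^ 2))) with hR
  set hcorr : ℝ → ℝ := fun ψ => (2 * t / (1 + t)) *
      (Real.sin ψ * Real.cos ψ * Real.sqrt (1 - t ^ 2 * Real.sin ψ ^ 2)
        / (1 + t * Real.sin ψ ^ 2)) with hhc
  set F : ℝ → ℝ := fun ψ => P (lphi t ψ) - R ψ - hcorr ψ with hF
  have hgcont : Continuous fun ψ : ℝ => Real.sqrt (1 - t ^ 2 * Real.sin ψ ^ 2) := contE (t ^ 2)
  have hFc : Continuous F := by
    apply Continuous.sub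
    · apply Continuous.sub
      · exact (intervalIntegral.continuous_primitive
          (fun a b => hcX.intervalIntegrable a b) 0).comp (lphi_cont ht0)
      · exact intervalIntegral.continuous_primitive (fun a b => hcR.intervalIntegrable a b) 0
    · exact continuous_const.mul (((Real.continuous_sin.mul Real.continuous_cos).mul
        hgcont).div (continuous_const.add (continuous_const.mul (Real.continuous_sin.pow 2)))
        fun ψ => (den_pos ht0 ψ).ne')
  have hzero : ∀ ψ ∈ Set.Ioo (0:ℝ) (π/2), HasDerivAt F 0 ψ := by
    intro ψ hψ
    obtain ⟨hψ0, hψ1⟩ := hψ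
    have hs0 : 0 < Real.sin ψ := Real.sin_pos_of_pos_of_lt_pi hψ0 (by linarith [Real.pi_pos])
    have hs1 : Real.sin ψ < 1 := by
      have h := Real.strictMonoOn_sin (a := ψ) (b := π/2)
        ⟨by linarith [Real.pi_pos], by linarith⟩ ⟨by linarith [Real.pi_pos], le_refl _⟩ hψ1
      simpa using h
    have hss : Real.sin ψ ^ 2 < 1 := by nlinarith
    have hden := den_pos ht0 ψ
    have hg2 : (0:ℝ) < 1 - t ^ 2 * Real.sin ψ ^ 2 := by
      nlinarith [mul_nonneg (sq_nonneg t) (sub_nonneg.2 hss.le)]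
    have hg : 0 < Real.sqrt (1 - t ^ 2 * Real.sin ψ ^ 2) := Real.sqrt_pos.2 hg2
    have hsq : Real.sqrt (1 - t ^ 2 * Real.sin ψ ^ 2) ^ 2 = 1 - t ^ 2 * Real.sin ψ ^ 2 :=
      Real.sq_sqrt hg2.le
    have hc2 : Real.cos ψ ^ 2 = 1 - Real.sin ψ ^ 2 := Real.cos_sq' ψ
    have h1ts : (0:ℝ) < 1 - t * Real.sin ψ ^ 2 := by nlinarith
    have hPd : HasDerivAt P (Real.sqrt (1 - X * Real.sin (lphi t ψ) ^ 2)) (lphi t ψ) :=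
      primitive_hasDerivAt hcX _
    have hRd : HasDerivAt R
        (2 / (1 + t) * Real.sqrt (1 - t ^ 2 * Real.sin ψ ^ 2)
          - (1 - t) * (1 / Real.sqrt (1 - t ^ 2 * Real.sin ψ ^ 2))) ψ :=
      primitive_hasDerivAt hcR ψ
    have hlphi := hasDerivAt_lphi ht0 ht1 ⟨hψ0, hψ1⟩
    have hcomp := hPd.comp ψ hlphi
    -- derivative of hcorr
    have hsc : HasDerivAt (fun ψ : ℝ => Real.sin ψ * Real.cos ψ)
        (Real.cos ψ * Real.cos ψ + Real.sin ψ * (-Real.sin ψ)) ψ :=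
      (Real.hasDerivAt_sin ψ).mul (Real.hasDerivAt_cos ψ)
    have hinner : HasDerivAt (fun ψ : ℝ => 1 - t ^ 2 * Real.sin ψ ^ 2)
        (-(t ^ 2 * (2 * Real.sin ψ * Real.cos ψ))) ψ := by
      have h3 := ((Real.hasDerivAt_sin ψ).pow 2).const_mul (t ^ 2)
      have h4 := h3.const_sub (1:ℝ)
      refine h4.congr_deriv ?_
      ring
    have hgd : HasDerivAt (fun ψ : ℝ => Real.sqrt (1 - t ^ 2 * Real.sin ψ ^ 2))
        (-(t ^ 2 * (2 * Real.sin ψ * Real.cos ψ)) / (2 * Real.sqrt (1 - t ^ 2 * Real.sin ψ ^ 2)))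
        ψ := hinner.sqrt hg2.ne'
    have hnum := hsc.mul hgd
    have hdend : HasDerivAt (fun ψ : ℝ => 1 + t * Real.sin ψ ^ 2)
        (t * (2 * Real.sin ψ * Real.cos ψ)) ψ := by
      have h3 := ((Real.hasDerivAt_sin ψ).pow 2).const_mul t
      have h4 := h3.const_add (1:ℝ)
      refine h4.congr_deriv ?_
      ring
    have hq := hnum.div hdend hden.ne'
    have hcd := hq.const_mul (2 * t / (1 + t))
    have hsum := (hcomp.sub hRd).sub hcd
    have hsinl : Real.sin (lphi t ψ) = sig t ψ :=
      Real.sin_arcsin (by linarith [sig_nonneg ht0 hs0.le]) (sig_le_one ht0 ht1 hs1.le hs0.le)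
    have hXv : Real.sqrt (1 - X * Real.sin (lphi t ψ) ^ 2)
        = (1 - t * Real.sin ψ ^ 2) / (1 + t * Real.sin ψ ^ 2) := by
      rw [hsinl, hXdef]
      exact sqrt_one_sub_X_sig_sq ht0 ht1 hss.le
    have hF' : HasDerivAt F _ ψ := hsum
    refine hF'.congr_deriv ?_
    symm
    simp only [Pi.mul_apply]
    rw [hXv]
    have h4 : Real.sqrt (1 - t ^ 2 * Real.sin ψ ^ 2) ^ 4 = (1 - t ^ 2 * Real.sin ψ ^ 2) ^ 2 := by
      rw [show (4:ℕ) = 2 * 2 from rfl, pow_mul, hsq]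
    field_simp
    ring_nf
    rw [hsq, hc2]
    ring
  have hend := eq_endpoints_of_deriv_zero hFc hzero
  have hF0 : F 0 = 0 := by
    rw [hF]
    simp only [lphi_zero]
    simp [hP, hR, hhc]
  have hFpi : F (π/2) = ellipticE X
      - ((2 / (1 + t)) * ellipticE (t ^ 2) - (1 - t) * ellipticK (t ^ 2)) - 0 := by
    rw [hF]
    simp only [lphi_pi2 ht0]
    have hsplit : R (π/2) = (2 / (1 + t)) * ellipticE (t ^ 2) - (1 - t) * ellipticK (t ^ 2) := by
      have i1 : IntervalIntegrable
          (fun θ : ℝ => 2 / (1 + t) * Real.sqrt (1 - t ^ 2 * Real.sin θ ^ 2)) volume 0 (π/2) :=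
        (continuous_const.mul (contE (t ^ 2)) : Continuous fun θ : ℝ => 2 / (1 + t) * Real.sqrt (1 - t ^ 2 * Real.sin θ ^ 2)).intervalIntegrable _ _
      have i2 : IntervalIntegrable
          (fun θ : ℝ => (1 - t) * (1 / Real.sqrt (1 - t ^ 2 * Real.sin θ ^ 2))) volume 0 (π/2) :=
        (continuous_const.mul (contK ht2_0 ht2_1) : Continuous fun θ : ℝ => (1 - t) * (1 / Real.sqrt (1 - t ^ 2 * Real.sin θ ^ 2))).intervalIntegrable _ _
      rw [hR]
      show (∫ θ in (0:ℝ)..(π/2), (2 / (1 + t) * Real.sqrt (1 - t ^ 2 * Real.sin θ ^ 2)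
        - (1 - t) * (1 / Real.sqrt (1 - t ^ 2 * Real.sin θ ^ 2)))) = _
      rw [intervalIntegral.integral_sub i1 i2, intervalIntegral.integral_const_mul,
        intervalIntegral.integral_const_mul, ellipticE, ellipticK]
    have hcorr_pi : hcorr (π/2) = 0 := by
      rw [hhc]
      simp [Real.cos_pi_div_two]
    rw [hsplit, hcorr_pi]
    rfl
  rw [hFpi, hF0] at hend
  linarith

end Landen

set_option maxHeartbeats 1000000 in
lemma main_aux (n : ℕ) : ∀ x ∈ Set.Ioo (0:ℝ) 1,
    16 * Real.sqrt (1-x) * (ellipticK x)^3 * ellipticE x ≤ π^4 / (1 - x^(n+1)) := by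
  induction n with
  | zero =>
    intro x hx
    obtain ⟨hx0, hx1⟩ := hx
    have hb0 : 0 < Real.sqrt (1-x) := Real.sqrt_pos.2 (by linarith)
    have hb2 : Real.sqrt (1-x)^2 = 1-x := Real.sq_sqrt (by linarith)
    have hK0 : 0 < ellipticK x := K_pos hx0.le hx1
    have hKle := K_le hx0.le hx1
    have hEle := E_le x hx0.le
    have hE0 : 0 < ellipticE x := E_pos hx0.le hx1
    have step1 : 16 * Real.sqrt (1-x) * (ellipticK x)^3 * ellipticE x
        ≤ 16 * Real.sqrt (1-x) * ((π/2)/Real.sqrt (1-x))^3 * (π/2) := by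
      gcongr
    calc 16 * Real.sqrt (1-x) * (ellipticK x)^3 * ellipticE x
        ≤ 16 * Real.sqrt (1-x) * ((π/2)/Real.sqrt (1-x))^3 * (π/2) := step1
      _ = π^4 / (1 - x^(0+1)) := by
          rw [pow_one, ← hb2]
          field_simp
          rw [Real.sqrt_sq hb0.le]
          ring
  | succ n ih =>
    intro x hx
    obtain ⟨hx0, hx1⟩ := hx
    set b := Real.sqrt (1-x) with hbdef
    have hb0 : 0 < b := Real.sqrt_pos.2 (by linarith)
    have hb2 : b^2 = 1-x := Real.sq_sqrt (by linarith)
    have hblt1 : b < 1 := by nlinarith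
    set t := (1-b)/(1+b) with htdef
    have ht0 : 0 < t := div_pos (by linarith) (by linarith)
    have ht1 : t < 1 := by rw [htdef, div_lt_one (by linarith)]; linarith
    have ht2_0 : (0:ℝ) < t^2 := by positivity
    have ht2_1 : t^2 < 1 := by nlinarith
    have hxeq : x = 4*t/(1+t)^2 := by
      rw [htdef]
      have h1b : (1:ℝ) + b ≠ 0 := by linarith
      field_simp
      nlinarith [hb2]
    have hbt : b = (1-t)/(1+t) := by
      rw [htdef]
      have h1b : (1:ℝ) + b ≠ 0 := by linarith
      rw [eq_div_iff (by positivity)]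
      field_simp
      ring
    have htlex : t ≤ x := by
      rw [htdef, div_le_iff₀ (by linarith)]
      nlinarith [hb2]
    clear_value b t
    have hKx : ellipticK x = (1+t) * ellipticK (t^2) := by rw [hxeq]; exact landenK ht0 ht1
    have hEx : ellipticE x = 2/(1+t) * ellipticE (t^2) - (1-t) * ellipticK (t^2) := by
      rw [hxeq]; exact landenE ht0 ht1
    set K1 := ellipticK (t^2) with hK1def
    set E1 := ellipticE (t^2) with hE1def
    have hK1 : 0 < K1 := K_pos ht2_0.le ht2_1
    have hE1 : 0 < E1 := E_pos ht2_0.le ht2_1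
    have hE1K1 : E1 ≤ (1 - t^2/2) * K1 := E_le_K ht2_0.le ht2_1
    clear_value K1 E1
    set u := 1 - t^2 with hudef
    have hu0 : 0 < u := by rw [hudef]; linarith
    have hsu2 : Real.sqrt u ^ 2 = u := Real.sq_sqrt hu0.le
    have hsu0 : 0 < Real.sqrt u := Real.sqrt_pos.2 hu0
    have key : b * (1+t)^3 * K1^3 * (2/(1+t)*E1 - (1-t)*K1) ≤ Real.sqrt u * K1^3 * E1 := by
      have h1t : (0:ℝ) < 1 + t := by linarith
      have hexp : b * (1+t)^3 * K1^3 * (2/(1+t)*E1 - (1-t)*K1)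
          = 2*u*K1^3*E1 - u^2*K1^4 := by
        rw [hbt, hudef]
        field_simp
        ring
      rw [hexp]
      have hKge : 2*E1/(1+u) ≤ K1 := by
        rw [div_le_iff₀ (by linarith)]
        nlinarith [hE1K1]
      have hK1E : u^2 * K1^3 * (2*E1/(1+u)) ≤ u^2 * K1^4 := by
        have hpos : (0:ℝ) ≤ u^2 * K1^3 := by positivity
        calc u^2 * K1^3 * (2*E1/(1+u)) ≤ u^2 * K1^3 * K1 := by
              exact mul_le_mul_of_nonneg_left hKge hpos
          _ = u^2 * K1^4 := by ring
      have h2u : 2*u/(1+u) ≤ Real.sqrt u := by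
        rw [div_le_iff₀ (by linarith)]
        nlinarith [sq_nonneg (Real.sqrt u - 1), hsu2, Real.sqrt_nonneg u]
      calc 2*u*K1^3*E1 - u^2*K1^4 ≤ 2*u*K1^3*E1 - u^2*K1^3*(2*E1/(1+u)) := by linarith
        _ = K1^3*E1*(2*u/(1+u)) := by field_simp; ring
        _ ≤ K1^3*E1*Real.sqrt u := by
            exact mul_le_mul_of_nonneg_left h2u (by positivity)
        _ = Real.sqrt u * K1^3 * E1 := by ring
    have ih1 : 16 * Real.sqrt (1 - t^2) * K1^3 * E1 ≤ π^4 / (1 - (t^2)^(n+1)) := by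
      rw [hK1def, hE1def]
      exact ih (t^2) ⟨ht2_0, ht2_1⟩
    have hsqu : Real.sqrt (1 - t^2) = Real.sqrt u := by rw [hudef]
    have hpow : (t^2)^(n+1) ≤ x^(n+2) := by
      have h1 : (t^2)^(n+1) = t^(2*(n+1)) := by rw [← pow_mul]
      have h2 : t^(2*(n+1)) ≤ x^(2*(n+1)) := pow_le_pow_left₀ ht0.le htlex _
      have h3 : x^(2*(n+1)) ≤ x^(n+2) :=
        pow_le_pow_of_le_one hx0.le hx1.le (by omega)
      rw [h1]; linarith
    have hxpow1 : x^(n+2) < 1 := pow_lt_one₀ hx0.le hx1 (by omega)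
    have hdenpos : 0 < 1 - x^(n+2) := by linarith
    have hfrac : π^4 / (1 - (t^2)^(n+1)) ≤ π^4 / (1 - x^(n+2)) := by
      apply div_le_div_of_nonneg_left (by positivity) hdenpos
      linarith
    show 16 * b * ellipticK x ^ 3 * ellipticE x ≤ π ^ 4 / (1 - x ^ (n + 2))
    calc 16 * b * (ellipticK x)^3 * ellipticE x
        = 16 * (b * (1+t)^3 * K1^3 * (2/(1+t)*E1 - (1-t)*K1)) := by
          rw [hKx, hEx]; ring
      _ ≤ 16 * (Real.sqrt u * K1^3 * E1) := by linarith [key]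
      _ = 16 * Real.sqrt (1 - t^2) * K1^3 * E1 := by rw [hsqu]; ring
      _ ≤ π^4 / (1 - (t^2)^(n+1)) := ih1
      _ ≤ π^4 / (1 - x^(n+2)) := hfrac

end EllAux

theorem elliptic_product_bound (x : ℝ) (hx : x ∈ Set.Ioo (0:ℝ) 1) :
    16 * Real.sqrt (1 - x) * (ellipticK x)^3 * ellipticE x / π^4 ≤ 1 := by
  obtain ⟨hx0, hx1⟩ := hx
  have h := fun n : ℕ => EllAux.main_aux n x ⟨hx0, hx1⟩
  have hpow : Filter.Tendsto (fun n : ℕ => x^(n+1)) Filter.atTop (nhds 0) := by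
    have h1 : Filter.Tendsto (fun n : ℕ => x^n) Filter.atTop (nhds 0) :=
      tendsto_pow_atTop_nhds_zero_of_lt_one hx0.le hx1
    exact h1.comp (Filter.tendsto_add_atTop_nat 1)
  have hlim : Filter.Tendsto (fun n : ℕ => π^4 / (1 - x^(n+1))) Filter.atTop (nhds (π^4)) := by
    have h2 : Filter.Tendsto (fun n : ℕ => 1 - x^(n+1)) Filter.atTop (nhds 1) := by
      simpa using (tendsto_const_nhds.sub hpow)
    have h3 := (tendsto_const_nhds (x := π^4)).div h2 (by norm_num)
    rw [div_one] at h3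
    exact h3
  have hle : 16 * Real.sqrt (1 - x) * (ellipticK x)^3 * ellipticE x ≤ π^4 :=
    ge_of_tendsto' hlim h
  rw [div_le_one (by positivity)]
  exact hle
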